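/- In the coin-tossing game, let E be the event that ∑_n x_n < ∞. Then P̲(E) = 0. Concretely: for any Skeptic strategy with initial capital K_0 < 1 keeping the capital nonnegative, if Forecaster announces p_n with ∏_n p_n > K_0 and Reality announces x_n = 1 for all n, then sup_n K_n ≤ K_0 / ∏_{n=1}^∞ p_n < 1. -/
import Mathlib


open Filter Finset

/-- Capital process in the coin-tossing game with initial capital `a`. -/
def cap (a : ℝ) (p M x : ℕ → ℝ) : ℕ → ℝ
  | 0 => a
  | n + 1 => cap a p M x n + M n * (x n - p n)

/-- Forecaster's moves are probabilities in `[0,1]`. -/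
def ValidP (p : ℕ → ℝ) : Prop := ∀ n, p n ∈ Set.Icc (0 : ℝ) 1

/-- Reality's moves are in `{0,1}`. -/
def ValidX (x : ℕ → ℝ) : Prop := ∀ n, x n = 0 ∨ x n = 1

/-- A Skeptic strategy reads Forecaster's moves up to round `n` and Reality's
moves before round `n`. -/
def SAdapted (S : (ℕ → ℝ) → (ℕ → ℝ) → ℕ → ℝ) : Prop :=
  ∀ p p' x x' : ℕ → ℝ, ∀ n, (∀ k ≤ n, p k = p' k) → (∀ k < n, x k = x' k) →
    S p x n = S p' x' n

/-- A Reality strategy reads Forecaster's and Skeptic's moves up to round `n`. -/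
def RAdapted (R : (ℕ → ℝ) → (ℕ → ℝ) → ℕ → ℝ) : Prop :=
  ∀ p p' M M' : ℕ → ℝ, ∀ n, (∀ k ≤ n, p k = p' k) → (∀ k ≤ n, M k = M' k) →
    R p M n = R p' M' n

/-- Upper probability of an event `E` (a set of paths `(p, x)`). -/
noncomputable def UpperP (E : (ℕ → ℝ) → (ℕ → ℝ) → Prop) : ℝ :=
  sInf {a | ∃ S, SAdapted S ∧ ∀ p x, ValidP p → ValidX x →
    (∀ n, 0 ≤ cap a p (S p x) x n) ∧
    (E p x → ∀ ε : ℝ, 0 < ε → ∃ n, 1 - ε < cap a p (S p x) x n)}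

/-- Lower probability. -/
noncomputable def LowerP (E : (ℕ → ℝ) → (ℕ → ℝ) → Prop) : ℝ :=
  1 - UpperP (fun p x => ¬ E p x)

/-- The set of initial capitals `a` for which some Reality strategy guarantees
the event and keeps the capital at most 1, against every Forecaster and every
Skeptic keeping the capital nonnegative. -/
def QSet (E : (ℕ → ℝ) → (ℕ → ℝ) → Prop) : Set ℝ :=
  {a | ∃ R, RAdapted R ∧ ∀ p M : ℕ → ℝ, ValidP p →
    ValidX (R p M) ∧
    ((∀ n, 0 ≤ cap a p M (R p M) n) →
      (E p (R p M) ∧ ∀ n, cap a p M (R p M) n ≤ 1))}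

noncomputable def UpperQ (E : (ℕ → ℝ) → (ℕ → ℝ) → Prop) : ℝ := sSup (QSet E)

noncomputable def LowerQ (E : (ℕ → ℝ) → (ℕ → ℝ) → Prop) : ℝ :=
  1 - UpperQ (fun p x => ¬ E p x)

lemma key (a : ℝ) (S : (ℕ → ℝ) → (ℕ → ℝ) → ℕ → ℝ) (hS : SAdapted S)
    (hnn : ∀ p x, ValidP p → ValidX x → ∀ n, 0 ≤ cap a p (S p x) x n)
    (p : ℕ → ℝ) (P : ℝ) (hp : ValidP p) (hP : 0 < P)
    (hprod : Tendsto (fun n => ∏ k ∈ Finset.range n, p k) atTop (nhds P)) :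
    ∀ n, cap a p (S p (fun _ => 1)) (fun _ => 1) n ≤ a / P := by
  have ha : 0 ≤ a := hnn p (fun _ => 1) hp (fun _ => Or.inr rfl) 0
  have ppos : ∀ n, 0 < p n := by
    intro m
    rcases lt_or_eq_of_le (hp m).1 with h | h
    · exact h
    · exfalso
      have h0 : Tendsto (fun n => ∏ k ∈ Finset.range n, p k) atTop (nhds 0) := by
        refine tendsto_const_nhds.congr' ?_
        filter_upwards [eventually_ge_atTop (m + 1)] with n hn
        exact (Finset.prod_eq_zero (Finset.mem_range.2 (by omega)) h.symm).symm
      exact absurd (tendsto_nhds_unique hprod h0) hP.ne'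
  have hPle : ∀ n, P ≤ ∏ k ∈ Finset.range n, p k := by
    intro n
    refine le_of_tendsto hprod ?_
    filter_upwards [eventually_ge_atTop n] with m hm
    calc ∏ k ∈ Finset.range m, p k
        = (∏ k ∈ Finset.range n, p k) * ∏ k ∈ Finset.Ico n m, p k :=
          (Finset.prod_range_mul_prod_Ico p hm).symm
      _ ≤ ∏ k ∈ Finset.range n, p k := by
          apply mul_le_of_le_one_right
          · exact Finset.prod_nonneg fun i _ => (hp i).1
          · exact Finset.prod_le_one (fun i _ => (hp i).1) (fun i _ => (hp i).2)
  set M : ℕ → ℝ := S p (fun _ => 1) with hM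
  have main : ∀ n, cap a p M (fun _ => 1) n ≤ a / ∏ k ∈ Finset.range n, p k := by
    intro n
    induction n with
    | zero => simp [cap]
    | succ n ih =>
      set x' : ℕ → ℝ := fun k => if k < n then 1 else 0 with hx'def
      have hx' : ValidX x' := by
        intro k
        by_cases h : k < n <;> simp [hx'def, h]
      have heqS : ∀ k ≤ n, S p x' k = M k := by
        intro k hk
        refine hS p p x' (fun _ => 1) k (fun _ _ => rfl) (fun j hj => ?_)
        simp [hx'def, lt_of_lt_of_le hj hk]
      have heqcap : ∀ m ≤ n, cap a p (S p x') x' m = cap a p M (fun _ => 1) m := by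
        intro m hm
        induction m with
        | zero => rfl
        | succ m ihm =>
          have hm' : m ≤ n := le_of_lt (Nat.lt_of_succ_le hm)
          simp only [cap, ihm hm', heqS m hm']
          have : x' m = 1 := by simp [hx'def, Nat.lt_of_succ_le hm]
          rw [this]
      have h0 := hnn p x' hp hx' (n + 1)
      have hcap' : cap a p (S p x') x' (n + 1)
          = cap a p M (fun _ => 1) n - M n * p n := by
        simp only [cap, heqcap n le_rfl, heqS n le_rfl]
        have : x' n = 0 := by simp [hx'def]
        rw [this]; ring
      rw [hcap'] at h0
      have hMle : M n ≤ cap a p M (fun _ => 1) n / p n :=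
        (le_div_iff₀ (ppos n)).2 (by linarith)
      have h1 : 1 - p n ≥ 0 := by linarith [(hp n).2]
      have step : cap a p M (fun _ => 1) (n + 1) ≤ cap a p M (fun _ => 1) n / p n := by
        have h2 : M n * (1 - p n) ≤ (cap a p M (fun _ => 1) n / p n) * (1 - p n) :=
          mul_le_mul_of_nonneg_right hMle h1
        have h3 : cap a p M (fun _ => 1) n + (cap a p M (fun _ => 1) n / p n) * (1 - p n)
            = cap a p M (fun _ => 1) n / p n := by
          rw [eq_div_iff (ppos n).ne', add_mul, div_mul_eq_mul_div, div_mul_cancel₀ _ (ppos n).ne']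
          ring
        simp only [cap]
        calc cap a p M (fun _ => 1) n + M n * (1 - p n)
            ≤ cap a p M (fun _ => 1) n + (cap a p M (fun _ => 1) n / p n) * (1 - p n) := by
              linarith
          _ = cap a p M (fun _ => 1) n / p n := h3
      calc cap a p M (fun _ => 1) (n + 1) ≤ cap a p M (fun _ => 1) n / p n := step
        _ ≤ (a / ∏ k ∈ Finset.range n, p k) / p n := by gcongr; exact (ppos n).le
        _ = a / ∏ k ∈ Finset.range (n + 1), p k := by
            rw [Finset.prod_range_succ, ← div_div]
  intro n
  refine (main n).trans ?_
  exact div_le_div_of_nonneg_left ha hP (hPle n) |>.trans_eq rfl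

/-- In the coin-tossing game, the event `E` that `∑ x n < ∞` has lower
probability 0.  Concretely, for any Skeptic strategy with initial capital
`a < 1` keeping the capital nonnegative, if Forecaster plays `p` whose infinite
product converges to `P > a` and Reality plays `x n = 1` for all `n`, then the
capital never exceeds `a / P < 1`. -/
theorem stmt_14 :
    LowerP (fun _ x => Summable x) = 0 ∧
    ∀ a : ℝ, a < 1 →
      ∀ S, SAdapted S →
        (∀ p x, ValidP p → ValidX x → ∀ n, 0 ≤ cap a p (S p x) x n) →
        ∀ p : ℕ → ℝ, ∀ P : ℝ, ValidP p → 0 < P → a < P →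
          Tendsto (fun n => ∏ k ∈ Finset.range n, p k) atTop (nhds P) →
          (∀ n, cap a p (S p (fun _ => 1)) (fun _ => 1) n ≤ a / P) ∧
            a / P < 1 := by
  have hns : ¬ Summable (fun _ : ℕ => (1 : ℝ)) := fun h =>
    one_ne_zero (tendsto_nhds_unique tendsto_const_nhds h.tendsto_atTop_zero)
  constructor
  · -- LowerP = 0, i.e. UpperP (¬E) = 1
    have hmem : (1 : ℝ) ∈ {a | ∃ S, SAdapted S ∧ ∀ p x, ValidP p → ValidX x →
        (∀ n, 0 ≤ cap a p (S p x) x n) ∧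
        ((fun _ x => ¬ Summable x) p x → ∀ ε : ℝ, 0 < ε →
          ∃ n, 1 - ε < cap a p (S p x) x n)} := by
      refine ⟨fun _ _ _ => 0, fun _ _ _ _ _ _ _ => rfl, fun p x _ _ => ?_⟩
      have hone : ∀ n, cap 1 p (fun _ => 0) x n = 1 := by
        intro n; induction n with
        | zero => rfl
        | succ n ih => simp [cap, ih]
      exact ⟨fun n => by rw [hone n]; norm_num,
        fun _ ε hε => ⟨0, by rw [hone 0]; linarith⟩⟩
    have hlb : ∀ b ∈ {a | ∃ S, SAdapted S ∧ ∀ p x, ValidP p → ValidX x →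
        (∀ n, 0 ≤ cap a p (S p x) x n) ∧
        ((fun _ x => ¬ Summable x) p x → ∀ ε : ℝ, 0 < ε →
          ∃ n, 1 - ε < cap a p (S p x) x n)}, (1 : ℝ) ≤ b := by
      rintro b ⟨S, hS, hprop⟩
      by_contra hb
      push_neg at hb
      have hnn : ∀ p x, ValidP p → ValidX x → ∀ n, 0 ≤ cap b p (S p x) x n :=
        fun p x hp hx => (hprop p x hp hx).1
      have hb0 : 0 ≤ b :=
        hnn (fun _ => 1) (fun _ => 1) (fun _ => ⟨zero_le_one, le_refl 1⟩)
          (fun _ => Or.inr rfl) 0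
      set P : ℝ := (b + 1) / 2 with hPdef
      have hP : 0 < P := by rw [hPdef]; linarith
      have hbP : b < P := by rw [hPdef]; linarith
      have hP1 : P ≤ 1 := by rw [hPdef]; linarith
      set p : ℕ → ℝ := fun k => if k = 0 then P else 1 with hpdef
      have hp : ValidP p := by
        intro n
        by_cases h : n = 0 <;> simp [hpdef, h] <;> constructor <;> linarith
      have hprodeq : ∀ n, 1 ≤ n → (∏ k ∈ Finset.range n, p k) = P := by
        intro n hn
        rw [Finset.prod_eq_single_of_mem 0 (Finset.mem_range.2 hn)
          (fun c _ hc => by simp [hpdef, hc])]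
        simp [hpdef]
      have hprod : Tendsto (fun n => ∏ k ∈ Finset.range n, p k) atTop (nhds P) := by
        refine tendsto_const_nhds.congr' ?_
        filter_upwards [eventually_ge_atTop 1] with n hn
        exact (hprodeq n hn).symm
      have hbound := key b S hS hnn p P hp hP hprod
      have hε : (0 : ℝ) < 1 - b / P := by
        have : b / P < 1 := (div_lt_one hP).2 hbP
        linarith
      obtain ⟨n, hn⟩ := (hprop p (fun _ => 1) hp (fun _ => Or.inr rfl)).2
        hns (1 - b / P) hε
      have := hbound n
      simp only [sub_sub_cancel] at hn
      linarith
    have : UpperP (fun _ x => ¬ Summable x) = 1 := by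
      unfold UpperP
      exact le_antisymm (csInf_le ⟨1, hlb⟩ hmem) (le_csInf ⟨1, hmem⟩ hlb)
    unfold LowerP
    rw [this]; ring
  · intro a _ S hS hnn p P hp hP haP hprod
    exact ⟨key a S hS hnn p P hp hP hprod, (div_lt_one hP).2 haP⟩
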